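/- If a matrix filter A satisfies the full rank condition ∑_j A(2j) = ∑_j A(2j+1) = I and (A,B) is a matrix QMF system, then the coefficients of B sum to the zero matrix: ∑_j B(j) = 0. -/

import Mathlib

open Matrix Function

lemma even_part_sum (d : ℕ) (A : ℤ → Matrix (Fin d) (Fin d) ℝ)
    (hA : (Function.support A).Finite) :
    (∑ᶠ j : ℤ, A (2*j)) = ∑ j ∈ hA.toFinset.filter (fun j => j % 2 = 0), A j := by
  have hinj : Function.Injective (fun j : ℤ => 2*j) := by intro a b h; simp only [] at h; omega
  rw [← finsum_mem_range (f := A) hinj]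
  have hfin : (Set.range (fun j : ℤ => 2*j) ∩ support A).Finite :=
    hA.subset Set.inter_subset_right
  rw [finsum_mem_eq_sum A hfin]
  apply Finset.sum_congr
  · ext m
    simp only [Set.Finite.mem_toFinset, Set.mem_inter_iff, Set.mem_range,
      Finset.mem_filter, mem_support]
    constructor
    · rintro ⟨⟨j, rfl⟩, h⟩; exact ⟨h, by omega⟩
    · rintro ⟨h, hm⟩; exact ⟨⟨m/2, by omega⟩, h⟩
  · intros; rfl

lemma odd_part_sum (d : ℕ) (A : ℤ → Matrix (Fin d) (Fin d) ℝ)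
    (hA : (Function.support A).Finite) :
    (∑ᶠ j : ℤ, A (2*j + 1)) = ∑ j ∈ hA.toFinset.filter (fun j => ¬ j % 2 = 0), A j := by
  have hinj : Function.Injective (fun j : ℤ => 2*j + 1) := by intro a b h; simp only [] at h; omega
  rw [← finsum_mem_range (f := A) hinj]
  have hfin : (Set.range (fun j : ℤ => 2*j + 1) ∩ support A).Finite :=
    hA.subset Set.inter_subset_right
  rw [finsum_mem_eq_sum A hfin]
  apply Finset.sum_congr
  · ext m
    simp only [Set.Finite.mem_toFinset, Set.mem_inter_iff, Set.mem_range,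
      Finset.mem_filter, mem_support]
    constructor
    · rintro ⟨⟨j, rfl⟩, h⟩; exact ⟨h, by omega⟩
    · rintro ⟨h, hm⟩; exact ⟨⟨m/2, by omega⟩, h⟩
  · intros; rfl

theorem qmf_full_rank_wavelet_sum_zero (d : ℕ)
    (A B : ℤ → Matrix (Fin d) (Fin d) ℝ)
    (hAfin : (Function.support A).Finite)
    (hBfin : (Function.support B).Finite)
    (hQMF_A : ∀ k : ℤ, (∑ᶠ j : ℤ, (A j)ᵀ * A (j - 2*k)) =
      (if k = 0 then (2:ℝ) • (1 : Matrix (Fin d) (Fin d) ℝ) else 0))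
    (hQMF_B : ∀ k : ℤ, (∑ᶠ j : ℤ, (B j)ᵀ * B (j - 2*k)) =
      (if k = 0 then (2:ℝ) • (1 : Matrix (Fin d) (Fin d) ℝ) else 0))
    (hQMF_AB : ∀ k : ℤ, (∑ᶠ j : ℤ, (A j)ᵀ * B (j - 2*k)) = 0)
    (hFR0 : (∑ᶠ j : ℤ, A (2*j)) = 1)
    (hFR1 : (∑ᶠ j : ℤ, A (2*j + 1)) = 1) :
    (∑ᶠ j : ℤ, B j) = 0 := by
  classical
  set sA := hAfin.toFinset with hsA
  set sB := hBfin.toFinset with hsB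
  set N : ℕ := (sA ∪ sB).sup Int.natAbs with hN
  have hbound : ∀ x ∈ sA ∪ sB, x.natAbs ≤ N := fun x hx => Finset.le_sup hx
  set K : Finset ℤ := Finset.Icc (-(N:ℤ)) N with hK
  set Be : Matrix (Fin d) (Fin d) ℝ := ∑ m ∈ sB.filter (fun m => m % 2 = 0), B m with hBe
  set Bo : Matrix (Fin d) (Fin d) ℝ := ∑ m ∈ sB.filter (fun m => ¬ m % 2 = 0), B m with hBo
  -- Step A: finsum to finset sum
  have stepA : ∀ k : ℤ, (∑ᶠ j : ℤ, (A j)ᵀ * B (j - 2*k)) =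
      ∑ j ∈ sA, (A j)ᵀ * B (j - 2*k) := by
    intro k
    apply finsum_eq_finset_sum_of_support_subset
    intro j hj
    simp only [Function.mem_support, ne_eq] at hj
    simp only [Finset.mem_coe, hsA, Set.Finite.mem_toFinset, Function.mem_support, ne_eq]
    intro h
    apply hj
    rw [h, Matrix.transpose_zero, zero_mul]
  -- Step C: inner sums
  have stepC : ∀ j ∈ sA, (∑ k ∈ K, B (j - 2*k)) =
      ∑ m ∈ sB.filter (fun m => m % 2 = j % 2), B m := by
    intro j hj
    have hjN : j.natAbs ≤ N := hbound j (Finset.mem_union_left _ hj)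
    have himg : (∑ k ∈ K, B (j - 2*k)) = ∑ m ∈ K.image (fun k => j - 2*k), B m := by
      rw [Finset.sum_image]
      intro a _ b _ h
      have h' : j - 2*a = j - 2*b := h
      omega
    rw [himg]
    symm
    apply Finset.sum_subset
    · intro m hm
      simp only [Finset.mem_filter] at hm
      obtain ⟨hmB, hmpar⟩ := hm
      have hmN : m.natAbs ≤ N := hbound m (Finset.mem_union_right _ hmB)
      simp only [Finset.mem_image, hK, Finset.mem_Icc]
      exact ⟨(j - m)/2, by omega, by omega⟩
    · intro m hm hnm
      by_contra hB
      apply hnm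
      simp only [Finset.mem_image, hK, Finset.mem_Icc] at hm
      obtain ⟨k, _, rfl⟩ := hm
      have : (j - 2*k) ∈ sB := by
        simp only [hsB, Set.Finite.mem_toFinset, Function.mem_support]
        exact hB
      simp only [Finset.mem_filter]
      exact ⟨this, by omega⟩
  -- Step B: the big double sum
  have stepB : (0 : Matrix (Fin d) (Fin d) ℝ) =
      ∑ j ∈ sA, (A j)ᵀ * ∑ k ∈ K, B (j - 2*k) := by
    have h1 : (0 : Matrix (Fin d) (Fin d) ℝ) =
        ∑ k ∈ K, ∑ j ∈ sA, (A j)ᵀ * B (j - 2*k) := by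
      rw [Finset.sum_congr rfl (fun k _ => (stepA k).symm)]
      simp [hQMF_AB]
    rw [h1, Finset.sum_comm]
    apply Finset.sum_congr rfl
    intro j _
    rw [Finset.mul_sum]
  -- substitute stepC and split by parity
  have stepD : (0 : Matrix (Fin d) (Fin d) ℝ) = Be + Bo := by
    rw [stepB, Finset.sum_congr rfl (fun j hj => by rw [stepC j hj])]
    rw [← Finset.sum_filter_add_sum_filter_not sA (fun j => j % 2 = 0)]
    have he : ∑ j ∈ sA.filter (fun j => j % 2 = 0),
        (A j)ᵀ * ∑ m ∈ sB.filter (fun m => m % 2 = j % 2), B m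
        = ∑ j ∈ sA.filter (fun j => j % 2 = 0), (A j)ᵀ * Be := by
      apply Finset.sum_congr rfl
      intro j hj
      simp only [Finset.mem_filter] at hj
      rw [hj.2]
    have ho : ∑ j ∈ sA.filter (fun j => ¬ j % 2 = 0),
        (A j)ᵀ * ∑ m ∈ sB.filter (fun m => m % 2 = j % 2), B m
        = ∑ j ∈ sA.filter (fun j => ¬ j % 2 = 0), (A j)ᵀ * Bo := by
      apply Finset.sum_congr rfl
      intro j hj
      simp only [Finset.mem_filter] at hj
      congr 1
      apply Finset.sum_congr _ (fun _ _ => rfl)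
      apply Finset.filter_congr
      intro m _
      have hj2 := hj.2
      omega
    rw [he, ho, ← Finset.sum_mul, ← Finset.sum_mul, ← Matrix.transpose_sum,
      ← Matrix.transpose_sum]
    have hA0 : ∑ j ∈ sA.filter (fun j => j % 2 = 0), A j = 1 := by
      rw [← even_part_sum d A hAfin]; exact hFR0
    have hA1 : ∑ j ∈ sA.filter (fun j => ¬ j % 2 = 0), A j = 1 := by
      rw [← odd_part_sum d A hAfin]; exact hFR1
    rw [hA0, hA1, Matrix.transpose_one, one_mul, one_mul]
  -- conclude
  have hfin : (∑ᶠ j : ℤ, B j) = ∑ m ∈ sB, B m :=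
    finsum_eq_finset_sum_of_support_subset B (by rw [hsB, Set.Finite.coe_toFinset])
  rw [hfin, ← Finset.sum_filter_add_sum_filter_not sB (fun m => m % 2 = 0)]
  rw [← hBe, ← hBo]
  exact stepD.symm
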